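/- For every j ≥ 1, n_j ≥ 2^(j+2) · m_{j+2}, and for every j ≥ 2, n_j ≥ j · p_j, where p_j = n_1 · n_2 · ⋯ · n_{j-1}. -/

import Mathlib

/-- With `m 1 = m 2 = 2`, `m j = (m (j-1))^2` for `j ≥ 3`, and `n`
satisfying `n 1 ≥ 2^3 * m 3` and `n j ≥ (4 * n (j-1))^5 * m j` for `j ≥ 2`,
we have `n j ≥ 2^(j+2) * m (j+2)` for every `j ≥ 1`, and `n j ≥ j * p j` for
every `j ≥ 2`, where `p j = n 1 * n 2 * ⋯ * n (j-1)`. -/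
theorem stmt1 (m n : ℕ → ℕ) (hm1 : m 1 = 2) (hm2 : m 2 = 2)
    (hmrec : ∀ j, 3 ≤ j → m j = (m (j - 1)) ^ 2)
    (hn1 : 2 ^ 3 * m 3 ≤ n 1)
    (hnrec : ∀ j, 2 ≤ j → (4 * n (j - 1)) ^ 5 * m j ≤ n j)
    (p : ℕ → ℕ) (hp : ∀ j, p j = ∏ i ∈ Finset.Icc 1 (j - 1), n i) :
    (∀ j, 1 ≤ j → 2 ^ (j + 2) * m (j + 2) ≤ n j) ∧
    (∀ j, 2 ≤ j → j * p j ≤ n j) := by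
  -- every m j with j ≥ 1 is at least 2
  have hm_ge : ∀ j, 1 ≤ j → 2 ≤ m j := by
    have h2 : ∀ j, 2 ≤ j → 2 ≤ m j := by
      intro j hj
      induction j, hj using Nat.le_induction with
      | base => omega
      | succ j hj ih =>
        have h := hmrec (j + 1) (by omega)
        have h1 : j + 1 - 1 = j := by omega
        rw [h1] at h
        rw [h]
        nlinarith
    intro j hj
    rcases Nat.lt_or_ge j 2 with h | h
    · have : j = 1 := by omega
      rw [this, hm1]
    · exact h2 j h
  -- claim A
  have hA : ∀ j, 1 ≤ j → 2 ^ (j + 2) * m (j + 2) ≤ n j := by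
    intro j hj
    induction j, hj using Nat.le_induction with
    | base => exact hn1
    | succ j hj ih =>
      have hrec := hnrec (j + 1) (by omega)
      have h1 : j + 1 - 1 = j := by omega
      rw [h1] at hrec
      have hM : 2 ≤ m (j + 2) := hm_ge _ (by omega)
      have hM1 : 2 ≤ m (j + 1 + 2 - 1) := hm_ge _ (by omega)
      have hm3 : m (j + 1 + 2) = m (j + 2) ^ 2 := by
        have h := hmrec (j + 1 + 2) (by omega)
        have : j + 1 + 2 - 1 = j + 2 := by omega
        rw [this] at h
        exact h
      have hNpos : 1 ≤ n j := le_trans (Nat.mul_pos (Nat.two_pow_pos _) (by omega)) ih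
      have hM1' : 2 ≤ m (j + 1) := hm_ge _ (by omega)
      calc 2 ^ (j + 1 + 2) * m (j + 1 + 2)
          = (2 * m (j + 2)) * (2 ^ (j + 2) * m (j + 2)) := by
            rw [hm3]; ring
        _ ≤ n j * n j := by
            refine Nat.mul_le_mul (le_trans ?_ ih) ih
            have h2 : (2 : ℕ) ≤ 2 ^ (j + 2) := by
              calc (2 : ℕ) = 2 ^ 1 := by norm_num
                _ ≤ 2 ^ (j + 2) := Nat.pow_le_pow_right (by norm_num) (by omega)
            exact Nat.mul_le_mul_right _ h2
        _ = n j ^ 2 := by ring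
        _ ≤ n j ^ 5 := Nat.pow_le_pow_right hNpos (by norm_num)
        _ ≤ (4 * n j) ^ 5 := Nat.pow_le_pow_left (by omega) 5
        _ ≤ (4 * n j) ^ 5 * m (j + 1) := Nat.le_mul_of_pos_right _ (by omega)
        _ ≤ n (j + 1) := hrec
  refine ⟨hA, ?_⟩
  -- claim B
  intro j hj
  induction j, hj using Nat.le_induction with
  | base =>
    have hp2 : p 2 = n 1 := by rw [hp]; simp
    have hrec := hnrec 2 (by norm_num)
    norm_num [hm2] at hrec
    have h1 : 4 * n 1 ≤ (4 * n 1) ^ 5 := Nat.le_self_pow (by norm_num) _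
    calc 2 * p 2 = 2 * n 1 := by rw [hp2]
      _ ≤ (4 * n 1) ^ 5 * 2 := by nlinarith
      _ ≤ n 2 := hrec
  | succ j hj ih =>
    obtain ⟨k, rfl⟩ : ∃ k, j = k + 1 := ⟨j - 1, by omega⟩
    set N := n (k + 1) with hN
    have hsplit : p (k + 1 + 1) = p (k + 1) * N := by
      rw [hp (k + 1 + 1), hp (k + 1)]
      have h1 : k + 1 + 1 - 1 = k + 1 := by omega
      have h2 : k + 1 - 1 = k := by omega
      rw [h1, h2, Finset.prod_Icc_succ_top (by omega : 1 ≤ k + 1)]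
    have hple : p (k + 1) ≤ N := le_trans (Nat.le_mul_of_pos_left _ (by omega)) ih
    have hAk : 2 ^ (k + 1 + 2) * m (k + 1 + 2) ≤ N := hA (k + 1) (by omega)
    have hMk : 2 ≤ m (k + 1 + 2) := hm_ge _ (by omega)
    have hjn : k + 2 ≤ N := by
      have hlt : k + 2 < 2 ^ (k + 1 + 2) := by
        calc k + 2 < 2 ^ (k + 2) := Nat.lt_two_pow_self
          _ ≤ 2 ^ (k + 1 + 2) := Nat.pow_le_pow_right (by norm_num) (by omega)
      calc k + 2 ≤ 2 ^ (k + 1 + 2) := le_of_lt hlt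
        _ ≤ 2 ^ (k + 1 + 2) * m (k + 1 + 2) := Nat.le_mul_of_pos_right _ (by omega)
        _ ≤ N := hAk
    have hrec := hnrec (k + 2) (by omega)
    have h1 : k + 2 - 1 = k + 1 := by omega
    rw [h1] at hrec
    have hNpos : 1 ≤ N := by omega
    have hMk2 : 2 ≤ m (k + 2) := hm_ge _ (by omega)
    calc (k + 1 + 1) * p (k + 1 + 1)
        = (k + 2) * (p (k + 1) * N) := by rw [hsplit]
      _ ≤ N * (N * N) := Nat.mul_le_mul hjn (Nat.mul_le_mul_right _ hple)
      _ = N ^ 3 := by ring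
      _ ≤ N ^ 5 := Nat.pow_le_pow_right hNpos (by norm_num)
      _ ≤ (4 * N) ^ 5 := Nat.pow_le_pow_left (by omega) 5
      _ ≤ (4 * N) ^ 5 * m (k + 2) := Nat.le_mul_of_pos_right _ (by omega)
      _ ≤ n (k + 2) := hrec
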